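/- Let n, m ≥ 1 and let A_1, …, A_m be n×n nonnegative real matrices such that for all i, j there exists l with (A_l)_{ij} > 0 or (A_l)_{ji} > 0. Define B by B_{ij} = max_{1≤l≤m} max((A_l)_{ij}, ((A_l)_{ji})^{-}) where t^{-} = 1/t if t > 0 and t^{-} = 0 otherwise, and let μ = λ(B) be the max-times spectral radius of B. A positive vector x ∈ ℝ_{>0}^n satisfies max_{1≤l≤m} ρ(A_l, x) = μ (i.e., x minimizes this objective over positive vectors) if and only if there exists a positive vector u ∈ ℝ_{>0}^n such that x = (μ^{-1}B)^* ⊗ u. -/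

import Mathlib

open scoped BigOperators

noncomputable section

/-- The max-times spectral radius (maximum geometric cycle mean) of a
nonnegative `n × n` real matrix. -/
def mtSpecRad {n : ℕ} (A : Matrix (Fin n) (Fin n) ℝ) : ℝ :=
  sSup { r : ℝ | ∃ (k : ℕ) (hk : 0 < k), k ≤ n ∧ ∃ f : Fin k → Fin n,
    r = (∏ t : Fin k, A (f t) (f ⟨((t : ℕ) + 1) % k, Nat.mod_lt _ hk⟩)) ^ ((k : ℝ)⁻¹) }

/-- The maximum cycle mean of a real `n × n` matrix (max-plus spectral radius). -/
def mpCycleMean {n : ℕ} (A : Matrix (Fin n) (Fin n) ℝ) : ℝ :=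
  sSup { r : ℝ | ∃ (k : ℕ) (hk : 0 < k), k ≤ n ∧ ∃ f : Fin k → Fin n,
    r = (∑ t : Fin k, A (f t) (f ⟨((t : ℕ) + 1) % k, Nat.mod_lt _ hk⟩)) / (k : ℝ) }

/-- Max-times matrix product. -/
def mtMul {n : ℕ} (A B : Matrix (Fin n) (Fin n) ℝ) : Matrix (Fin n) (Fin n) ℝ :=
  Matrix.of fun i j => ⨆ k : Fin n, A i k * B k j

/-- Max-times matrix powers, with `A^{⊗0} = I`. -/
def mtPow {n : ℕ} (A : Matrix (Fin n) (Fin n) ℝ) : ℕ → Matrix (Fin n) (Fin n) ℝ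
  | 0 => Matrix.of fun i j => if i = j then 1 else 0
  | (k + 1) => mtMul (mtPow A k) A

/-- Max-times Kleene star: entrywise maximum of `I, S, S^{⊗2}, …, S^{⊗(n-1)}`. -/
def mtStar {n : ℕ} (S : Matrix (Fin n) (Fin n) ℝ) : Matrix (Fin n) (Fin n) ℝ :=
  Matrix.of fun i j => ⨆ k : Fin n, mtPow S (k : ℕ) i j

/-- Max-times matrix-vector product. -/
def mtVecMul {n : ℕ} (S : Matrix (Fin n) (Fin n) ℝ) (u : Fin n → ℝ) : Fin n → ℝ :=
  fun i => ⨆ j, S i j * u j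

/-- Max-plus matrix product. -/
def mpMul {n : ℕ} (A B : Matrix (Fin n) (Fin n) ℝ) : Matrix (Fin n) (Fin n) ℝ :=
  Matrix.of fun i j => ⨆ k : Fin n, (A i k + B k j)

/-- `mpPow A k` is the max-plus power `A^{⊗(k+1)}`. -/
def mpPow {n : ℕ} (A : Matrix (Fin n) (Fin n) ℝ) : ℕ → Matrix (Fin n) (Fin n) ℝ
  | 0 => A
  | (k + 1) => mpMul (mpPow A k) A

/-- Max-plus Kleene star: `S^*_{ii} = max(0, max_{1≤k≤n-1} (S^{⊗k})_{ii})` and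
`S^*_{ij} = max_{1≤k≤n-1} (S^{⊗k})_{ij}` for `i ≠ j`. -/
def mpStar {n : ℕ} (S : Matrix (Fin n) (Fin n) ℝ) : Matrix (Fin n) (Fin n) ℝ :=
  Matrix.of fun i j =>
    if i = j then max 0 (⨆ k : Fin (n - 1), mpPow S (k : ℕ) i j)
    else ⨆ k : Fin (n - 1), mpPow S (k : ℕ) i j

/-- Max-plus matrix-vector product. -/
def mpVecMul {n : ℕ} (S : Matrix (Fin n) (Fin n) ℝ) (x : Fin n → ℝ) : Fin n → ℝ :=
  fun i => ⨆ j, (S i j + x j)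

/-- Chebyshev-like (max-times) distance between a nonnegative matrix `A` and the
rank-one reciprocal matrix with entries `x i / x j`. -/
def mtRho {n : ℕ} (A : Matrix (Fin n) (Fin n) ℝ) (x : Fin n → ℝ) : ℝ :=
  max (⨆ p : Fin n × Fin n, A p.1 p.2 * x p.2 / x p.1)
    (sSup { r : ℝ | ∃ i j, 0 < A i j ∧ r = x i / (A i j * x j) })

/-- The alternating max-times product `A ⊗ C^{⊗ i₁} ⊗ A ⊗ C^{⊗ i₂} ⊗ ⋯ ⊗ A ⊗ C^{⊗ i_k}`. -/
def mtChain {n : ℕ} (A C : Matrix (Fin n) (Fin n) ℝ) :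
    (k : ℕ) → (Fin k → ℕ) → Matrix (Fin n) (Fin n) ℝ
  | 0, _ => Matrix.of fun i j => if i = j then 1 else 0
  | (k + 1), f => mtMul (mtMul A (mtPow C (f 0))) (mtChain A C k (fun t => f t.succ))

/-- The optimal value `θ` of the constrained max-times approximation problem. -/
def mtTheta {n : ℕ} (A C : Matrix (Fin n) (Fin n) ℝ) : ℝ :=
  max (mtSpecRad A)
    (sSup { r : ℝ | ∃ k : ℕ, 0 < k ∧ k ≤ n - 1 ∧ ∃ f : Fin k → ℕ,
      1 ≤ ∑ t, f t ∧ (∑ t, f t) ≤ n - k ∧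
      r = (⨆ i, mtChain A C k f i i) ^ ((k : ℝ)⁻¹) })


section Aux

private lemma fbdd {ι : Type*} [Finite ι] (f : ι → ℝ) : BddAbove (Set.range f) :=
  Set.Finite.bddAbove (Set.finite_range f)

private lemma le_ciSup' {ι : Type*} [Finite ι] (f : ι → ℝ) (i : ι) : f i ≤ ⨆ j, f j :=
  le_ciSup (fbdd f) i

private lemma mtPow_nonneg {n : ℕ} {C : Matrix (Fin n) (Fin n) ℝ}
    (hC : ∀ i j, 0 ≤ C i j) : ∀ k (i j : Fin n), 0 ≤ mtPow C k i j := by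
  intro k
  induction k with
  | zero =>
    intro i j
    simp only [mtPow, Matrix.of_apply]
    split <;> norm_num
  | succ k ih =>
    intro i j
    have : Nonempty (Fin n) := ⟨i⟩
    calc (0:ℝ) ≤ mtPow C k i i * C i j := mul_nonneg (ih i i) (hC i j)
    _ ≤ _ := by
      simp only [mtPow, mtMul, Matrix.of_apply]
      exact le_ciSup' (fun l => mtPow C k i l * C l j) i

private lemma path_le_pow {n : ℕ} {C : Matrix (Fin n) (Fin n) ℝ}
    (hC : ∀ i j, 0 ≤ C i j) (p : ℕ → Fin n) :
    ∀ k, (∏ t ∈ Finset.range k, C (p t) (p (t+1))) ≤ mtPow C k (p 0) (p k) := by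
  intro k
  induction k with
  | zero => simp [mtPow]
  | succ k ih =>
    rw [Finset.prod_range_succ]
    have h1 : (∏ t ∈ Finset.range k, C (p t) (p (t+1))) * C (p k) (p (k+1)) ≤
        mtPow C k (p 0) (p k) * C (p k) (p (k+1)) :=
      mul_le_mul_of_nonneg_right ih (hC _ _)
    refine h1.trans ?_
    have : Nonempty (Fin n) := ⟨p 0⟩
    simp only [mtPow, mtMul, Matrix.of_apply]
    exact le_ciSup' (fun l => mtPow C k (p 0) l * C l (p (k+1))) (p k)

private lemma pow_le_path {n : ℕ} (C : Matrix (Fin n) (Fin n) ℝ)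
    (hC : ∀ i j, 0 ≤ C i j) :
    ∀ k, 0 < k → ∀ i j : Fin n, ∃ p : ℕ → Fin n, p 0 = i ∧ p k = j ∧
      mtPow C k i j ≤ ∏ t ∈ Finset.range k, C (p t) (p (t+1)) := by
  intro k hk
  induction k, hk using Nat.le_induction with
  | base =>
    intro i j
    have : Nonempty (Fin n) := ⟨i⟩
    refine ⟨fun t => if t = 0 then i else j, by simp, by simp, ?_⟩
    have hR : (∏ t ∈ Finset.range 1,
        C (if t = 0 then i else j) (if t + 1 = 0 then i else j)) = C i j := by
      simp
    rw [hR]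
    simp only [mtPow, mtMul, Matrix.of_apply]
    refine ciSup_le fun l => ?_
    rcases eq_or_ne i l with h|h
    · simp [h]
    · simp only [if_neg h, zero_mul]
      exact hC i j
  | succ k hk ih =>
    intro i j
    have : Nonempty (Fin n) := ⟨i⟩
    obtain ⟨l₀, hl₀⟩ := Finite.exists_max (fun l => mtPow C k i l * C l j)
    obtain ⟨p, hp0, hpk, hple⟩ := ih i l₀
    refine ⟨fun t => if t ≤ k then p t else j, by simpa using hp0, by simp, ?_⟩
    have hsup : mtPow C (k+1) i j ≤ mtPow C k i l₀ * C l₀ j := by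
      simp only [mtPow, mtMul, Matrix.of_apply]
      exact ciSup_le hl₀
    simp only [Finset.prod_range_succ]
    have hlast : (if k ≤ k then p k else j) = l₀ := by simp [hpk]
    have hlast2 : (if k + 1 ≤ k then p (k+1) else j) = j := by simp
    rw [hlast, hlast2]
    refine hsup.trans (mul_le_mul_of_nonneg_right (hple.trans (le_of_eq ?_)) (hC _ _))
    refine Finset.prod_congr rfl fun t ht => ?_
    rw [Finset.mem_range] at ht
    rw [if_pos (by omega), if_pos (by omega)]

private lemma mul_pow_le {n : ℕ} {C : Matrix (Fin n) (Fin n) ℝ}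
    (hC : ∀ i j, 0 ≤ C i j) :
    ∀ s (i j k : Fin n), C i j * mtPow C s j k ≤ mtPow C (s+1) i k := by
  intro s
  induction s with
  | zero =>
    intro i j k
    have : Nonempty (Fin n) := ⟨i⟩
    have h : mtPow C 1 i k = ⨆ l, mtPow C 0 i l * C l k := by
      simp only [mtPow, mtMul, Matrix.of_apply]
    by_cases hjk : j = k
    · subst hjk
      have : C i j * mtPow C 0 j j ≤ mtPow C 0 i i * C i j := by
        simp [mtPow]
      refine this.trans ?_
      rw [h]
      exact le_ciSup' (fun l => mtPow C 0 i l * C l j) i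
    · have : C i j * mtPow C 0 j k = 0 := by simp [mtPow, hjk]
      rw [this]
      exact mtPow_nonneg hC 1 i k
  | succ s ih =>
    intro i j k
    have : Nonempty (Fin n) := ⟨i⟩
    have hexp : mtPow C (s+1) j k = ⨆ l, mtPow C s j l * C l k := by
      simp only [mtPow, mtMul, Matrix.of_apply]
    have hexp2 : mtPow C (s+2) i k = ⨆ l, mtPow C (s+1) i l * C l k := by
      simp only [mtPow, mtMul, Matrix.of_apply]
    rw [hexp, Real.mul_iSup_of_nonneg (hC i j), hexp2]
    refine ciSup_le fun l => ?_
    calc C i j * (mtPow C s j l * C l k) = (C i j * mtPow C s j l) * C l k := by ring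
    _ ≤ mtPow C (s+1) i l * C l k := mul_le_mul_of_nonneg_right (ih i j l) (hC _ _)
    _ ≤ _ := le_ciSup' (fun l => mtPow C (s+1) i l * C l k) l

end Aux
private lemma pow_n_le_iSup {n : ℕ} {C : Matrix (Fin n) (Fin n) ℝ}
    (hC : ∀ i j, 0 ≤ C i j) (hn : 0 < n)
    (H : ∀ (c : ℕ) (p : ℕ → Fin n), 0 < c → c ≤ n → p c = p 0 →
       (∏ t ∈ Finset.range c, C (p t) (p (t+1))) ≤ 1) :
    ∀ i j : Fin n, mtPow C n i j ≤ ⨆ s : Fin n, mtPow C (s : ℕ) i j := by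
  intro i j
  obtain ⟨p, hp0, hpn, hple⟩ := pow_le_path C hC n hn i j
  have hcard : Fintype.card (Fin n) < (Finset.range (n+1)).card := by simp
  obtain ⟨a, ha, b, hb, hab, hpab⟩ :=
    Finset.exists_ne_map_eq_of_card_lt_of_maps_to (t := Finset.univ)
      (by simpa using hcard) (fun t (_ : t ∈ Finset.range (n+1)) => Finset.mem_univ (p t))
  -- wlog a < b
  have key : ∀ a b : ℕ, a < b → b ≤ n → p a = p b →
      mtPow C n i j ≤ ⨆ s : Fin n, mtPow C (s : ℕ) i j := by
    clear hab hpab ha hb a b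
    intro a b hab hbn hpab
    set c := b - a with hc
    have hc0 : 0 < c := by omega
    have hacb : a + c = b := by omega
    -- the cycle bound
    have hcyc : (∏ t ∈ Finset.Ico a b, C (p t) (p (t+1))) ≤ 1 := by
      have := H c (fun t => p (a + t)) hc0 (by omega)
        (by show p (a + c) = p (a + 0); rw [hacb, ← hpab, Nat.add_zero])
      rw [Finset.prod_Ico_eq_prod_range]
      refine le_trans (le_of_eq ?_) this
      exact Finset.prod_congr rfl fun t _ => by simp [Nat.add_assoc]
    -- the shortened path
    set q : ℕ → Fin n := fun t => if t < a then p t else p (t + c) with hq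
    have hq0 : q 0 = i := by
      rcases Nat.eq_zero_or_pos a with h0 | h0
      · simp only [hq]
        rw [if_neg (by omega), Nat.zero_add]
        rw [show c = b from by omega, ← hpab, h0, hp0]
      · simp only [hq]; rw [if_pos h0, hp0]
    have hqnc : q (n - c) = j := by
      have : ¬ (n - c < a) := by omega
      simp only [hq]
      rw [if_neg this, show n - c + c = n by omega, hpn]
    have hkey : (∏ t ∈ Finset.range (n - c), C (q t) (q (t+1))) =
        (∏ t ∈ Finset.range a, C (p t) (p (t+1))) *
        ∏ t ∈ Finset.Ico b n, C (p t) (p (t+1)) := by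
      have han : a ≤ n - c := by omega
      rw [← Finset.prod_range_mul_prod_Ico _ han]
      congr 1
      · refine Finset.prod_congr rfl fun t ht => ?_
        rw [Finset.mem_range] at ht
        have h1 : q t = p t := by simp only [hq]; rw [if_pos ht]
        have h2 : q (t+1) = p (t+1) := by
          simp only [hq]
          rcases Nat.lt_or_ge (t+1) a with hlt | hge
          · rw [if_pos hlt]
          · have hta : t + 1 = a := by omega
            rw [if_neg (by omega), show t + 1 + c = b from by omega, ← hpab, hta]
        rw [h1, h2]
      · rw [Finset.prod_Ico_eq_prod_range, Finset.prod_Ico_eq_prod_range]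
        have hnn : n - c - a = n - b := by omega
        rw [hnn]
        refine Finset.prod_congr rfl fun t _ => ?_
        have h1 : q (a + t) = p (b + t) := by
          simp only [hq]; rw [if_neg (by omega)]; congr 1; omega
        have h2 : q (a + t + 1) = p (b + t + 1) := by
          simp only [hq]; rw [if_neg (by omega)]; congr 1; omega
        rw [h1, h2]
    -- assemble
    have hA : (0:ℝ) ≤ ∏ t ∈ Finset.range a, C (p t) (p (t+1)) :=
      Finset.prod_nonneg fun t _ => hC _ _
    have hB2 : (0:ℝ) ≤ ∏ t ∈ Finset.Ico b n, C (p t) (p (t+1)) :=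
      Finset.prod_nonneg fun t _ => hC _ _
    have hsplit : (∏ t ∈ Finset.range n, C (p t) (p (t+1))) =
        ((∏ t ∈ Finset.range a, C (p t) (p (t+1))) *
         ∏ t ∈ Finset.Ico a b, C (p t) (p (t+1))) *
        ∏ t ∈ Finset.Ico b n, C (p t) (p (t+1)) := by
      rw [Finset.prod_range_mul_prod_Ico _ (le_of_lt hab),
        Finset.prod_range_mul_prod_Ico _ hbn]
    have hle2 : (∏ t ∈ Finset.range n, C (p t) (p (t+1))) ≤
        ∏ t ∈ Finset.range (n - c), C (q t) (q (t+1)) := by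
      rw [hsplit, hkey]
      have := mul_le_mul_of_nonneg_right
        (mul_le_mul_of_nonneg_left hcyc hA) hB2
      simpa using this
    have hfin : mtPow C (n - c) (q 0) (q (n - c)) ≤
        ⨆ s : Fin n, mtPow C (s : ℕ) i j := by
      rw [hq0, hqnc]
      exact le_ciSup' (fun s : Fin n => mtPow C (s : ℕ) i j) ⟨n - c, by omega⟩
    exact hple.trans (hle2.trans ((path_le_pow hC q (n - c)).trans hfin))
  rw [Finset.mem_range] at ha hb
  rcases lt_or_gt_of_ne hab with h | h
  · exact key a b h (by omega) hpab
  · exact key b a h (by omega) hpab.symm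
private lemma rpow_prod_le {k : ℕ} (hk : k ≠ 0) {g : Fin k → ℝ} {K : ℝ} (hK1 : 0 ≤ K)
    (h0 : ∀ t, 0 ≤ g t) (hgK : ∀ t, g t ≤ K) : (∏ t, g t) ^ ((k : ℝ)⁻¹) ≤ K := by
  have hP : (0:ℝ) ≤ ∏ t, g t := Finset.prod_nonneg fun t _ => h0 t
  have hPK : (∏ t, g t) ≤ K ^ k := by
    calc (∏ t, g t) ≤ ∏ _t : Fin k, K :=
          Finset.prod_le_prod (fun t _ => h0 t) (fun t _ => hgK t)
    _ = K ^ k := by simp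
  calc (∏ t, g t) ^ ((k : ℝ)⁻¹) ≤ (K ^ k) ^ ((k : ℝ)⁻¹) :=
        Real.rpow_le_rpow hP hPK (by positivity)
  _ = K := Real.pow_rpow_inv_natCast hK1 hk

private lemma cycle_prod_le {n k : ℕ} (hk : 0 < k) (B : Matrix (Fin n) (Fin n) ℝ)
    (hB : ∀ i j, 0 ≤ B i j) (x : Fin n → ℝ) (hx : ∀ i, 0 < x i) (f : Fin k → Fin n) (fx : ℝ)
    (hfx : ∀ i j, B i j * x j / x i ≤ fx) :
    (∏ t : Fin k, B (f t) (f ⟨((t : ℕ) + 1) % k, Nat.mod_lt _ hk⟩)) ^ ((k : ℝ)⁻¹) ≤ fx := by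
  have : NeZero k := ⟨hk.ne'⟩
  have hnk : Nonempty (Fin k) := ⟨⟨0, hk⟩⟩
  set σ : Fin k → Fin k := fun t => ⟨((t : ℕ) + 1) % k, Nat.mod_lt _ hk⟩ with hσ
  have hσe : ∀ t, σ t = t + 1 := by
    intro t
    simp only [hσ]
    ext
    simp [Fin.add_def]
  have hfx0 : 0 ≤ fx := by
    refine le_trans ?_ (hfx (f ⟨0, hk⟩) (f ⟨0, hk⟩))
    have h1 := hB (f ⟨0, hk⟩) (f ⟨0, hk⟩)
    have h2 := hx (f ⟨0, hk⟩)
    positivity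
  have hprod : (∏ t, x (f (σ t))) = ∏ t, x (f t) := by
    simp only [hσe]
    exact Equiv.prod_comp (Equiv.addRight (1 : Fin k)) (fun t => x (f t))
  have hxP : (0:ℝ) < ∏ t, x (f t) := Finset.prod_pos fun t _ => hx _
  have hP : (∏ t, B (f t) (f (σ t))) =
      ∏ t, (B (f t) (f (σ t)) * x (f (σ t)) / x (f t)) := by
    rw [Finset.prod_div_distrib, Finset.prod_mul_distrib, hprod, mul_div_assoc,
      div_self hxP.ne', mul_one]
  rw [hP]
  refine rpow_prod_le hk.ne' hfx0 (fun t => ?_) (fun t => hfx _ _)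
  exact div_nonneg (mul_nonneg (hB _ _) (hx _).le) (hx _).le

private lemma cycle_le_specRad {n k : ℕ} (B : Matrix (Fin n) (Fin n) ℝ)
    (hk : 0 < k) (hkn : k ≤ n) (p : ℕ → Fin n) (hp : p k = p 0) :
    (∏ t ∈ Finset.range k, B (p t) (p (t+1))) ^ ((k : ℝ)⁻¹) ∈
      { r : ℝ | ∃ (k' : ℕ) (hk' : 0 < k'), k' ≤ n ∧ ∃ f : Fin k' → Fin n,
        r = (∏ t : Fin k', B (f t) (f ⟨((t : ℕ) + 1) % k', Nat.mod_lt _ hk'⟩)) ^ ((k' : ℝ)⁻¹) } := by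
  refine ⟨k, hk, hkn, fun t => p t.val, ?_⟩
  congr 1
  rw [← Fin.prod_univ_eq_prod_range (fun t => B (p t) (p (t+1))) k]
  refine Finset.prod_congr rfl fun t _ => ?_
  have harg : p (((t:ℕ) + 1) % k) = p ((t:ℕ) + 1) := by
    rcases Nat.lt_or_ge ((t:ℕ)+1) k with h | h
    · rw [Nat.mod_eq_of_lt h]
    · have he : (t:ℕ)+1 = k := by omega
      rw [he, Nat.mod_self, hp]
  show B (p ↑t) (p ((t:ℕ) + 1)) = B (p ↑t) (p (((t:ℕ) + 1) % k))
  rw [harg]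

/-- A positive vector `x` satisfies `max_l ρ(A_l, x) = μ` (i.e. minimizes
the simultaneous objective) iff `x = (μ⁻¹ B)^* ⊗ u` for some positive `u`, where
`B_{ij} = max_l max((A_l)_{ij}, ((A_l)_{ji})⁻)` and `μ = λ(B)`. -/
theorem mt_rho_multi_minimizers {n m : ℕ} (hn : 1 ≤ n) (hm : 1 ≤ m)
    (A : Fin m → Matrix (Fin n) (Fin n) ℝ)
    (hA : ∀ l i j, 0 ≤ A l i j)
    (hAA : ∀ i j, ∃ l, 0 < A l i j ∨ 0 < A l j i)
    (B : Matrix (Fin n) (Fin n) ℝ)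
    (hB : ∀ i j, B i j = ⨆ l : Fin m, max (A l i j) (A l j i)⁻¹)
    (μ : ℝ) (hμ : μ = mtSpecRad B) (x : Fin n → ℝ) (hx : ∀ i, 0 < x i) :
    (⨆ l : Fin m, mtRho (A l) x) = μ ↔
      ∃ u : Fin n → ℝ, (∀ i, 0 < u i) ∧ x = mtVecMul (mtStar (μ⁻¹ • B)) u := by
  classical
  have hnn : Nonempty (Fin n) := ⟨⟨0, hn⟩⟩
  have hmn : Nonempty (Fin m) := ⟨⟨0, hm⟩⟩
  -- B is entrywise positive
  have hBpos : ∀ i j, 0 < B i j := by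
    intro i j
    obtain ⟨l, hl⟩ := hAA i j
    rw [hB]
    rcases hl with hl | hl
    · exact lt_of_lt_of_le (lt_of_lt_of_le hl (le_max_left _ _))
        (le_ciSup' (fun l => max (A l i j) (A l j i)⁻¹) l)
    · exact lt_of_lt_of_le (lt_of_lt_of_le (inv_pos.mpr hl) (le_max_right _ _))
        (le_ciSup' (fun l => max (A l i j) (A l j i)⁻¹) l)
  have hAB : ∀ l i j, A l i j ≤ B i j := fun l i j => by
    rw [hB]
    exact le_trans (le_max_left _ _) (le_ciSup' (fun l => max (A l i j) (A l j i)⁻¹) l)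
  have hAB' : ∀ l i j, (A l i j)⁻¹ ≤ B j i := fun l i j => by
    rw [hB]
    exact le_trans (le_max_right _ _) (le_ciSup' (fun l' => max (A l' j i) (A l' i j)⁻¹) l)
  -- the objective
  set fx : ℝ := ⨆ p : Fin n × Fin n, B p.1 p.2 * x p.2 / x p.1 with hfxdef
  have hfx_term : ∀ i j, B i j * x j / x i ≤ fx := fun i j =>
    le_ciSup' (fun p : Fin n × Fin n => B p.1 p.2 * x p.2 / x p.1) (i, j)
  have hfx_pos : 0 < fx := by
    refine lt_of_lt_of_le ?_ (hfx_term ⟨0, hn⟩ ⟨0, hn⟩)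
    exact div_pos (mul_pos (hBpos _ _) (hx _)) (hx _)
  -- bounded above: the spectral-radius set
  set K : ℝ := max 1 (⨆ p : Fin n × Fin n, B p.1 p.2) with hKdef
  have hK1 : (1:ℝ) ≤ K := le_max_left _ _
  have hBK : ∀ i j, B i j ≤ K := fun i j =>
    le_trans (le_ciSup' (fun p : Fin n × Fin n => B p.1 p.2) (i, j)) (le_max_right _ _)
  have hSbdd : BddAbove { r : ℝ | ∃ (k : ℕ) (hk : 0 < k), k ≤ n ∧ ∃ f : Fin k → Fin n,
      r = (∏ t : Fin k, B (f t) (f ⟨((t : ℕ) + 1) % k, Nat.mod_lt _ hk⟩)) ^ ((k : ℝ)⁻¹) } := by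
    refine ⟨K, fun r hr => ?_⟩
    obtain ⟨k, hk, hkn, f, rfl⟩ := hr
    exact rpow_prod_le hk.ne' (le_trans zero_le_one hK1)
      (fun t => (hBpos _ _).le) (fun t => hBK _ _)
  -- cycle bound for μ
  have hμ_mem : ∀ (k : ℕ) (p : ℕ → Fin n), 0 < k → k ≤ n → p k = p 0 →
      (∏ t ∈ Finset.range k, B (p t) (p (t+1))) ^ ((k : ℝ)⁻¹) ≤ μ := by
    intro k p hk hkn hp
    rw [hμ, mtSpecRad]
    exact le_csSup hSbdd (cycle_le_specRad B hk hkn p hp)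
  have hμ1 : (1:ℝ) ≤ μ := by
    set i0 : Fin n := ⟨0, hn⟩
    obtain ⟨l, hl⟩ := hAA i0 i0
    have hl' : 0 < A l i0 i0 := by rcases hl with h | h <;> exact h
    have hBii : 1 ≤ B i0 i0 := by
      rw [hB]
      refine le_trans ?_ (le_ciSup' (fun l => max (A l i0 i0) (A l i0 i0)⁻¹) l)
      rcases le_total (A l i0 i0) 1 with h1 | h1
      · exact le_trans ((one_le_inv₀ hl').mpr h1) (le_max_right _ _)
      · exact le_trans h1 (le_max_left _ _)
    have h2 := hμ_mem 1 (fun _ => i0) one_pos hn rfl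
    simp only [Finset.prod_range_one, Nat.cast_one, inv_one, Real.rpow_one] at h2
    linarith
  have hμpos : (0:ℝ) < μ := lt_of_lt_of_le one_pos hμ1
  -- nonnegativity of C = μ⁻¹ • B
  have hCnn : ∀ i j, 0 ≤ (μ⁻¹ • B) i j := fun i j => by
    rw [Matrix.smul_apply, smul_eq_mul]
    exact mul_nonneg (inv_nonneg.mpr hμpos.le) (hBpos i j).le
  -- cycle products of C are ≤ 1
  have HC : ∀ (c : ℕ) (p : ℕ → Fin n), 0 < c → c ≤ n → p c = p 0 →
      (∏ t ∈ Finset.range c, (μ⁻¹ • B) (p t) (p (t+1))) ≤ 1 := by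
    intro c p hc hcn hp
    have hPB : (0:ℝ) ≤ ∏ t ∈ Finset.range c, B (p t) (p (t+1)) :=
      Finset.prod_nonneg fun t _ => (hBpos _ _).le
    have h1 : (∏ t ∈ Finset.range c, B (p t) (p (t+1))) ≤ μ ^ c := by
      calc (∏ t ∈ Finset.range c, B (p t) (p (t+1)))
          = ((∏ t ∈ Finset.range c, B (p t) (p (t+1))) ^ ((c:ℝ)⁻¹)) ^ c :=
            (Real.rpow_inv_natCast_pow hPB (by omega)).symm
      _ ≤ μ ^ c := pow_le_pow_left₀ (Real.rpow_nonneg hPB _) (hμ_mem c p hc hcn hp) c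
    have h2 : (∏ t ∈ Finset.range c, (μ⁻¹ • B) (p t) (p (t+1)))
        = μ⁻¹ ^ c * ∏ t ∈ Finset.range c, B (p t) (p (t+1)) := by
      simp only [Matrix.smul_apply, smul_eq_mul]
      rw [Finset.prod_mul_distrib, Finset.prod_const, Finset.card_range]
    rw [h2]
    calc μ⁻¹ ^ c * (∏ t ∈ Finset.range c, B (p t) (p (t+1)))
        ≤ μ⁻¹ ^ c * μ ^ c := mul_le_mul_of_nonneg_left h1 (by positivity)
    _ = 1 := by rw [← mul_pow, inv_mul_cancel₀ hμpos.ne', one_pow]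
  -- μ is at most the objective
  have hμ_le_fx : μ ≤ fx := by
    rw [hμ, mtSpecRad]
    refine Real.sSup_le ?_ hfx_pos.le
    rintro r ⟨k, hk, hkn, f, rfl⟩
    exact cycle_prod_le hk B (fun i j => (hBpos i j).le) x hx f fx hfx_term
  -- the subeigenvector characterization
  have hsub_iff : fx ≤ μ ↔ ∀ i j, (μ⁻¹ • B) i j * x j ≤ x i := by
    constructor
    · intro h i j
      have h1 := le_trans (hfx_term i j) h
      rw [div_le_iff₀ (hx i)] at h1
      rw [Matrix.smul_apply, smul_eq_mul]
      calc μ⁻¹ * B i j * x j = μ⁻¹ * (B i j * x j) := by ring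
      _ ≤ μ⁻¹ * (μ * x i) := mul_le_mul_of_nonneg_left h1 (by positivity)
      _ = x i := by field_simp
    · intro h
      refine ciSup_le fun p => ?_
      rw [div_le_iff₀ (hx p.1)]
      have h1 := h p.1 p.2
      rw [Matrix.smul_apply, smul_eq_mul] at h1
      calc B p.1 p.2 * x p.2 = μ * (μ⁻¹ * B p.1 p.2 * x p.2) := by
            field_simp
      _ ≤ μ * x p.1 := mul_le_mul_of_nonneg_left (by linarith [h1]) hμpos.le
  -- the objective equals fx
  have hRho_fx : (⨆ l, mtRho (A l) x) = fx := by
    apply le_antisymm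
    · refine ciSup_le fun l => ?_
      rw [mtRho]
      refine max_le ?_ ?_
      · refine ciSup_le fun p => ?_
        refine le_trans ?_ (hfx_term p.1 p.2)
        exact (div_le_div_iff_of_pos_right (hx p.1)).mpr
          (mul_le_mul_of_nonneg_right (hAB l _ _) (hx _).le)
      · refine Real.sSup_le ?_ hfx_pos.le
        rintro r ⟨i, j, hij, rfl⟩
        refine le_trans ?_ (hfx_term j i)
        rw [div_le_div_iff₀ (mul_pos hij (hx j)) (hx j)]
        have h1 : 1 ≤ B j i * A l i j := by
          have h2 := mul_le_mul_of_nonneg_right (hAB' l i j) hij.le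
          rw [inv_mul_cancel₀ hij.ne'] at h2
          exact h2
        nlinarith [mul_pos (hx i) (hx j),
          mul_le_mul_of_nonneg_right h1 (mul_pos (hx i) (hx j)).le]
    · refine ciSup_le fun p => ?_
      obtain ⟨i, j⟩ := p
      have hRhoNN : ∀ l, 0 ≤ mtRho (A l) x := by
        intro l
        rw [mtRho]
        refine le_trans ?_ (le_max_left _ _)
        refine le_trans ?_
          (le_ciSup' (fun p : Fin n × Fin n => A l p.1 p.2 * x p.2 / x p.1) (i, i))
        exact div_nonneg (mul_nonneg (hA l i i) (hx i).le) (hx i).le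
      show B i j * x j / x i ≤ _
      rw [div_eq_mul_inv, hB, Real.iSup_mul_of_nonneg (hx j).le,
        Real.iSup_mul_of_nonneg (inv_nonneg.mpr (hx i).le)]
      refine ciSup_le fun l => ?_
      refine le_trans ?_ (le_ciSup' (fun l => mtRho (A l) x) l)
      rw [max_mul_of_nonneg _ _ (hx j).le,
        max_mul_of_nonneg _ _ (inv_nonneg.mpr (hx i).le)]
      refine max_le ?_ ?_
      · rw [mtRho]
        refine le_trans ?_ (le_max_left _ _)
        have := le_ciSup' (fun p : Fin n × Fin n => A l p.1 p.2 * x p.2 / x p.1) (i, j)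
        simpa [div_eq_mul_inv] using this
      · rcases eq_or_lt_of_le (hA l j i) with h0 | h0
        · rw [← h0]
          simpa using hRhoNN l
        · rw [mtRho]
          refine le_trans ?_ (le_max_right _ _)
          have hmem : x j / (A l j i * x i) ∈
              {r | ∃ i' j', 0 < A l i' j' ∧ r = x i' / (A l i' j' * x j')} :=
            ⟨j, i, h0, rfl⟩
          have hbdd : BddAbove {r | ∃ i' j', 0 < A l i' j' ∧ r = x i' / (A l i' j' * x j')} := by
            apply Set.Finite.bddAbove
            apply Set.Finite.subset
              (Set.finite_range (fun p : Fin n × Fin n => x p.1 / (A l p.1 p.2 * x p.2)))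
            rintro r ⟨i', j', -, rfl⟩
            exact ⟨(i', j'), rfl⟩
          refine le_trans (le_of_eq ?_) (le_csSup hbdd hmem)
          field_simp
  rw [hRho_fx]
  constructor
  · -- forward: minimizer gives Kleene star representation, with u = x
    intro hfxμ
    refine ⟨x, hx, ?_⟩
    have hsub : ∀ i j, (μ⁻¹ • B) i j * x j ≤ x i := hsub_iff.mp hfxμ.le
    have hpows : ∀ k (i j : Fin n), mtPow (μ⁻¹ • B) k i j * x j ≤ x i := by
      intro k
      induction k with
      | zero =>
        intro i j
        simp only [mtPow, Matrix.of_apply]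
        rcases eq_or_ne i j with h | h
        · simp [h]
        · simp [h, (hx i).le]
      | succ k ih =>
        intro i j
        simp only [mtPow, mtMul, Matrix.of_apply]
        rw [Real.iSup_mul_of_nonneg (hx j).le]
        refine ciSup_le fun l => ?_
        calc mtPow (μ⁻¹ • B) k i l * (μ⁻¹ • B) l j * x j
            = mtPow (μ⁻¹ • B) k i l * ((μ⁻¹ • B) l j * x j) := by ring
        _ ≤ mtPow (μ⁻¹ • B) k i l * x l :=
            mul_le_mul_of_nonneg_left (hsub l j) (mtPow_nonneg hCnn k i l)
        _ ≤ x i := ih i l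
    funext i
    show x i = ⨆ j, mtStar (μ⁻¹ • B) i j * x j
    apply le_antisymm
    · refine le_trans ?_ (le_ciSup' (fun j => mtStar (μ⁻¹ • B) i j * x j) i)
      have h1 : (1:ℝ) ≤ mtStar (μ⁻¹ • B) i i := by
        rw [mtStar, Matrix.of_apply]
        refine le_trans ?_
          (le_ciSup' (fun s : Fin n => mtPow (μ⁻¹ • B) (s : ℕ) i i) ⟨0, hn⟩)
        simp [mtPow]
      nlinarith [hx i]
    · refine ciSup_le fun j => ?_
      rw [mtStar, Matrix.of_apply, Real.iSup_mul_of_nonneg (hx j).le]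
      exact ciSup_le fun s => hpows (s : ℕ) i j
  · -- backward: Kleene star representation gives minimizer
    rintro ⟨u, hu, hxu⟩
    refine le_antisymm (hsub_iff.mpr ?_) hμ_le_fx
    intro i j
    have hstar_le : ∀ k, k ≤ n → ∀ i' j' : Fin n,
        mtPow (μ⁻¹ • B) k i' j' ≤ mtStar (μ⁻¹ • B) i' j' := by
      intro k hk i' j'
      rw [mtStar, Matrix.of_apply]
      rcases eq_or_lt_of_le hk with he | hlt
      · subst he
        exact pow_n_le_iSup hCnn hn HC i' j'
      · exact le_ciSup' (fun s : Fin n => mtPow (μ⁻¹ • B) (s : ℕ) i' j') ⟨k, hlt⟩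
    have hxdef : ∀ i' : Fin n, x i' = ⨆ k, mtStar (μ⁻¹ • B) i' k * u k := fun i' => by
      rw [hxu]; rfl
    rw [hxdef j, Real.mul_iSup_of_nonneg (hCnn i j), hxdef i]
    refine ciSup_le fun k => ?_
    refine le_trans ?_ (le_ciSup' (fun k => mtStar (μ⁻¹ • B) i k * u k) k)
    have h1 : (μ⁻¹ • B) i j * mtStar (μ⁻¹ • B) j k ≤ mtStar (μ⁻¹ • B) i k := by
      rw [show mtStar (μ⁻¹ • B) j k = ⨆ s : Fin n, mtPow (μ⁻¹ • B) (s : ℕ) j k from rfl,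
        Real.mul_iSup_of_nonneg (hCnn i j)]
      refine ciSup_le fun s => ?_
      exact le_trans (mul_pow_le hCnn (s : ℕ) i j k)
        (hstar_le ((s : ℕ) + 1) (by omega) i k)
    calc (μ⁻¹ • B) i j * (mtStar (μ⁻¹ • B) j k * u k)
        = ((μ⁻¹ • B) i j * mtStar (μ⁻¹ • B) j k) * u k := by ring
    _ ≤ mtStar (μ⁻¹ • B) i k * u k := mul_le_mul_of_nonneg_right h1 (hu k).le

end
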